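/- Let K ⊆ ℝ² be a Jordan curve and let δ > 0. There is no sequence (u_n)_{n ∈ ℕ} of pairwise disjoint nondegenerate vertical segments contained in K, each of length at least δ, that converges in the Hausdorff distance to a vertical segment u* of length at least δ. -/

import Mathlib

/-- A Jordan curve is the image of a continuous injective map from the unit
circle `{z ∈ ℂ : |z| = 1}` into `ℝ²`. -/
def IsJordanCurve (K : Set (ℝ × ℝ)) : Prop :=
  ∃ γ : Metric.sphere (0 : ℂ) 1 → ℝ × ℝ,
    Continuous γ ∧ Function.Injective γ ∧ Set.range γ = K

open Filter Set

private lemma straddle_aux {v₁ v₂ p₁ p₂ : ℝ}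
    (h₁ : |p₁ - v₁| < |v₂ - v₁| / 2) (h₂ : |p₂ - v₂| < |v₂ - v₁| / 2) :
    min p₁ p₂ ≤ (v₁ + v₂) / 2 ∧ (v₁ + v₂) / 2 ≤ max p₁ p₂ := by
  rcases abs_sub_lt_iff.mp h₁ with ⟨h₁a, h₁b⟩
  rcases abs_sub_lt_iff.mp h₂ with ⟨h₂a, h₂b⟩
  rcases le_total v₁ v₂ with h | h
  · rw [abs_of_nonneg (by linarith)] at h₁a h₁b h₂a h₂b
    exact ⟨le_trans (min_le_left _ _) (by linarith),
      le_trans (by linarith) (le_max_right _ _)⟩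
  · rw [abs_of_nonpos (by linarith)] at h₁a h₁b h₂a h₂b
    exact ⟨le_trans (min_le_right _ _) (by linarith),
      le_trans (by linarith) (le_max_left _ _)⟩

private lemma sphere_abs_one (z : Metric.sphere (0 : ℂ) 1) : ‖(z : ℂ)‖ = 1 := by
  have := z.2
  rwa [Metric.mem_sphere, dist_zero_right] at this

private lemma sphere_ne_zero (z : Metric.sphere (0 : ℂ) 1) : (z : ℂ) ≠ 0 := by
  intro h
  have := sphere_abs_one z
  rw [h] at this
  simp at this

/-- The angle coordinate centered at `w`: injective on the sphere and continuous away
from `w`. -/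
private noncomputable def sphApp (w : Metric.sphere (0 : ℂ) 1) :
    Metric.sphere (0 : ℂ) 1 → ℝ :=
  fun z => Complex.arg (-(z : ℂ) / (w : ℂ))

private lemma sphApp_injective (w : Metric.sphere (0 : ℂ) 1) :
    Function.Injective (sphApp w) := by
  intro z z' h
  have hw : (w : ℂ) ≠ 0 := sphere_ne_zero w
  have habs : ‖(-(z : ℂ) / (w : ℂ))‖ = ‖(-(z' : ℂ) / (w : ℂ))‖ := by
    simp [map_div₀, sphere_abs_one]
  have heq := Complex.ext_norm_arg habs h
  have h2 := (div_eq_div_iff hw hw).mp heq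
  have h3 : -(z : ℂ) = -(z' : ℂ) := mul_right_cancel₀ hw h2
  exact Subtype.ext (neg_injective h3)

private lemma sphApp_continuousAt {w z : Metric.sphere (0 : ℂ) 1} (hz : z ≠ w) :
    ContinuousAt (sphApp w) z := by
  have hw : (w : ℂ) ≠ 0 := sphere_ne_zero w
  have hcont : ContinuousAt (fun z : Metric.sphere (0 : ℂ) 1 => -(z : ℂ) / (w : ℂ)) z :=
    ((continuous_subtype_val.neg).div_const _).continuousAt
  have hslit : -(z : ℂ) / (w : ℂ) ∈ Complex.slitPlane := by
    set u : ℂ := -(z : ℂ) / (w : ℂ) with hu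
    have habs : ‖u‖ = 1 := by
      simp [hu, map_div₀, sphere_abs_one]
    rw [Complex.mem_slitPlane_iff]
    by_contra hcon
    push_neg at hcon
    obtain ⟨hre, him⟩ := hcon
    have hure : u = (u.re : ℂ) := Complex.ext (by simp) (by simp [him])
    have habs' : |u.re| = 1 := by
      rw [hure, Complex.norm_real, Real.norm_eq_abs] at habs
      exact habs
    have hone : u.re = -1 := by
      rcases abs_cases u.re with ⟨h1, _⟩ | ⟨h1, _⟩ <;> linarith
    have humo : u = -1 := by rw [hure, hone]; norm_num
    rw [hu] at humo
    apply hz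
    apply Subtype.ext
    have h2 := (div_eq_iff hw).mp humo
    rw [neg_one_mul] at h2
    exact neg_injective h2
  have hcomp : ContinuousAt (fun z : Metric.sphere (0 : ℂ) 1 =>
      Complex.arg (-(z : ℂ) / (w : ℂ))) z :=
    ContinuousAt.comp (g := Complex.arg) (Complex.continuousAt_arg hslit) hcont
  exact hcomp

/-- There is no sequence of pairwise disjoint nondegenerate vertical segments
`{xₙ} × [aₙ, bₙ]` contained in a Jordan curve `K`, each of length at least `δ`,
converging in the Hausdorff distance (equivalently, endpointwise) to a vertical
segment `{x₀} × [a₀, b₀]` of length at least `δ`. -/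
theorem no_hausdorff_limit_of_disjoint_long_segments
    (K : Set (ℝ × ℝ)) (hK : IsJordanCurve K) (δ : ℝ) (hδ : 0 < δ) :
    ¬ ∃ (x a b : ℕ → ℝ) (x₀ a₀ b₀ : ℝ),
        (∀ n, a n < b n) ∧
        (∀ n, ({x n} ×ˢ Set.Icc (a n) (b n) : Set (ℝ × ℝ)) ⊆ K) ∧
        (∀ n, δ ≤ b n - a n) ∧
        Pairwise (Function.onFun Disjoint
          (fun n => ({x n} ×ˢ Set.Icc (a n) (b n) : Set (ℝ × ℝ)))) ∧
        δ ≤ b₀ - a₀ ∧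
        Filter.Tendsto x Filter.atTop (nhds x₀) ∧
        Filter.Tendsto a Filter.atTop (nhds a₀) ∧
        Filter.Tendsto b Filter.atTop (nhds b₀) := by
  rintro ⟨x, a, b, x₀, a₀, b₀, hab, hsub, hlen, hdisj, hlen₀, hx, ha, hb⟩
  obtain ⟨γ, hγc, hγi, hγr⟩ := hK
  have hemb : Topology.IsEmbedding γ := (hγc.isClosedEmbedding hγi).isEmbedding
  have hclosed : IsClosed K := by
    rw [← hγr]; exact (isCompact_range hγc).isClosed
  -- three parameter heights inside (a₀, b₀)
  set q₁ : ℝ := a₀ + δ / 4 with hq₁def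
  set q₂ : ℝ := a₀ + δ / 2 with hq₂def
  set q₃ : ℝ := a₀ + 3 * δ / 4 with hq₃def
  have hq₁lt : a₀ < q₁ ∧ q₁ < b₀ := by constructor <;> [rw [hq₁def]; rw [hq₁def]] <;> linarith
  have hq₂lt : a₀ < q₂ ∧ q₂ < b₀ := by constructor <;> [rw [hq₂def]; rw [hq₂def]] <;> linarith
  have hq₃lt : a₀ < q₃ ∧ q₃ < b₀ := by constructor <;> [rw [hq₃def]; rw [hq₃def]] <;> linarith
  -- limit points (x₀, q) belong to K = range γ
  have hlim : ∀ q : ℝ, a₀ < q → q < b₀ → (x₀, q) ∈ Set.range γ := by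
    intro q hql hqr
    rw [hγr]
    have htend : Tendsto (fun n => (x n, q)) atTop (nhds (x₀, q)) :=
      hx.prodMk_nhds tendsto_const_nhds
    apply hclosed.mem_of_tendsto htend
    filter_upwards [ha.eventually_lt_const hql, hb.eventually_const_lt hqr] with n h1 h2
    exact hsub n (Set.mk_mem_prod (Set.mem_singleton _) ⟨h1.le, h2.le⟩)
  obtain ⟨t₁, ht₁⟩ := hlim q₁ hq₁lt.1 hq₁lt.2
  obtain ⟨t₂, ht₂⟩ := hlim q₂ hq₂lt.1 hq₂lt.2
  obtain ⟨w, hw⟩ := hlim q₃ hq₃lt.1 hq₃lt.2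
  have hq12 : q₁ ≠ q₂ := by
    rw [hq₁def, hq₂def]; intro h; have := add_left_cancel h; linarith
  have hq13 : q₁ ≠ q₃ := by
    rw [hq₁def, hq₃def]; intro h; have := add_left_cancel h; linarith
  have hq23 : q₂ ≠ q₃ := by
    rw [hq₂def, hq₃def]; intro h; have := add_left_cancel h; linarith
  have ht₁₂ : t₁ ≠ t₂ := by
    intro h; apply hq12
    have : (x₀, q₁) = (x₀, q₂) := by rw [← ht₁, ← ht₂, h]
    exact (Prod.ext_iff.mp this).2
  have ht₁w : t₁ ≠ w := by
    intro h; apply hq13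
    have : (x₀, q₁) = (x₀, q₃) := by rw [← ht₁, ← hw, h]
    exact (Prod.ext_iff.mp this).2
  have ht₂w : t₂ ≠ w := by
    intro h; apply hq23
    have : (x₀, q₂) = (x₀, q₃) := by rw [← ht₂, ← hw, h]
    exact (Prod.ext_iff.mp this).2
  set ψ := sphApp w with hψdef
  set v₁ := ψ t₁ with hv₁def
  set v₂ := ψ t₂ with hv₂def
  have hv12 : v₁ ≠ v₂ := fun h => ht₁₂ (sphApp_injective w h)
  have hε : 0 < |v₂ - v₁| / 2 := by
    have : v₂ - v₁ ≠ 0 := sub_ne_zero.mpr (Ne.symm hv12)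
    positivity
  -- approximating preimage points on the sphere
  set s₁ : ℕ → Metric.sphere (0 : ℂ) 1 := fun n => Function.invFun γ (x n, q₁) with hs₁def
  set s₂ : ℕ → Metric.sphere (0 : ℂ) 1 := fun n => Function.invFun γ (x n, q₂) with hs₂def
  have hγs : ∀ (q : ℝ) (n : ℕ), a n ≤ q → q ≤ b n →
      γ (Function.invFun γ (x n, q)) = (x n, q) := by
    intro q n h1 h2
    apply Function.invFun_eq
    have : (x n, q) ∈ K := hsub n (Set.mk_mem_prod (Set.mem_singleton _) ⟨h1, h2⟩)
    rw [← hγr] at this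
    exact this
  have hstend : ∀ (q : ℝ) (t : Metric.sphere (0 : ℂ) 1), a₀ < q → q < b₀ →
      γ t = (x₀, q) →
      Tendsto (fun n => Function.invFun γ (x n, q)) atTop (nhds t) := by
    intro q t hql hqr ht
    rw [hemb.tendsto_nhds_iff, ht]
    have htend : Tendsto (fun n => (x n, q)) atTop (nhds (x₀, q)) :=
      hx.prodMk_nhds tendsto_const_nhds
    apply htend.congr'
    filter_upwards [ha.eventually_lt_const hql, hb.eventually_const_lt hqr] with n h1 h2
    exact (hγs q n h1.le h2.le).symm
  have hs₁t : Tendsto s₁ atTop (nhds t₁) := hstend q₁ t₁ hq₁lt.1 hq₁lt.2 ht₁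
  have hs₂t : Tendsto s₂ atTop (nhds t₂) := hstend q₂ t₂ hq₂lt.1 hq₂lt.2 ht₂
  have hψ₁ : Tendsto (fun n => ψ (s₁ n)) atTop (nhds v₁) :=
    (sphApp_continuousAt ht₁w).tendsto.comp hs₁t
  have hψ₂ : Tendsto (fun n => ψ (s₂ n)) atTop (nhds v₂) :=
    (sphApp_continuousAt ht₂w).tendsto.comp hs₂t
  -- combine all eventual facts
  have hbig : ∀ᶠ n in atTop,
      (a n < q₁ ∧ q₁ < b n) ∧ (a n < q₂ ∧ q₂ < b n) ∧
      |ψ (s₁ n) - v₁| < |v₂ - v₁| / 2 ∧ |ψ (s₂ n) - v₂| < |v₂ - v₁| / 2 := by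
    have e5 : ∀ᶠ n in atTop, |ψ (s₁ n) - v₁| < |v₂ - v₁| / 2 := by
      filter_upwards [hψ₁ (Metric.ball_mem_nhds v₁ hε)] with n hn
      simp only [Set.mem_preimage, Metric.mem_ball, Real.dist_eq] at hn
      exact hn
    have e6 : ∀ᶠ n in atTop, |ψ (s₂ n) - v₂| < |v₂ - v₁| / 2 := by
      filter_upwards [hψ₂ (Metric.ball_mem_nhds v₂ hε)] with n hn
      simp only [Set.mem_preimage, Metric.mem_ball, Real.dist_eq] at hn
      exact hn
    filter_upwards [ha.eventually_lt_const hq₁lt.1, hb.eventually_const_lt hq₁lt.2,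
      ha.eventually_lt_const hq₂lt.1, hb.eventually_const_lt hq₂lt.2, e5, e6]
      with n h1 h2 h3 h4 h5 h6
    exact ⟨⟨h1, h2⟩, ⟨h3, h4⟩, h5, h6⟩
  obtain ⟨N, hN⟩ := eventually_atTop.mp hbig
  -- distinct x-coordinates for large indices
  have hxne : ∀ n m, N ≤ n → N ≤ m → n ≠ m → x n ≠ x m := by
    intro n m hn hm hnm he
    have h2n := (hN n hn).2.1
    have h2m := (hN m hm).2.1
    have hmem1 : (x n, q₂) ∈ ({x n} ×ˢ Set.Icc (a n) (b n) : Set (ℝ × ℝ)) :=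
      Set.mk_mem_prod (Set.mem_singleton _) ⟨h2n.1.le, h2n.2.le⟩
    have hmem2 : (x n, q₂) ∈ ({x m} ×ˢ Set.Icc (a m) (b m) : Set (ℝ × ℝ)) := by
      rw [he]; exact Set.mk_mem_prod (Set.mem_singleton _) ⟨h2m.1.le, h2m.2.le⟩
    exact Set.disjoint_left.mp (hdisj hnm) hmem1 hmem2
  -- pick two large indices whose x-coordinate differs from x₀
  obtain ⟨n, m, hn, hm, hnm, hxn, hxm⟩ :
      ∃ n m, N ≤ n ∧ N ≤ m ∧ n ≠ m ∧ x n ≠ x₀ ∧ x m ≠ x₀ := by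
    by_cases h1 : x N = x₀
    · refine ⟨N + 1, N + 2, by omega, by omega, by omega, ?_, ?_⟩
      · intro h; exact hxne (N + 1) N (by omega) le_rfl (by omega) (h.trans h1.symm)
      · intro h; exact hxne (N + 2) N (by omega) le_rfl (by omega) (h.trans h1.symm)
    · by_cases h2 : x (N + 1) = x₀
      · refine ⟨N, N + 2, le_rfl, by omega, by omega, h1, ?_⟩
        intro h; exact hxne (N + 2) (N + 1) (by omega) (by omega) (by omega) (h.trans h2.symm)
      · exact ⟨N, N + 1, le_rfl, by omega, by omega, h1, h2⟩
  -- the midpoint value is attained on both preimage arcs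
  have key : ∀ k, N ≤ k → x k ≠ x₀ →
      (v₁ + v₂) / 2 ∈ ψ '' (γ ⁻¹' ({x k} ×ˢ Set.Icc (a k) (b k))) := by
    intro k hk hxk
    obtain ⟨⟨ha1, hb1⟩, ⟨ha2, hb2⟩, hp1, hp2⟩ := hN k hk
    have husub : ({x k} ×ˢ Set.Icc (a k) (b k) : Set (ℝ × ℝ)) ⊆ Set.range γ := by
      rw [hγr]; exact hsub k
    have hApre : IsPreconnected (γ ⁻¹' ({x k} ×ˢ Set.Icc (a k) (b k))) := by
      rw [← hemb.toIsInducing.isPreconnected_image,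
        Set.image_preimage_eq_of_subset husub]
      exact isPreconnected_singleton.prod isPreconnected_Icc
    have hwne : ∀ z ∈ γ ⁻¹' ({x k} ×ˢ Set.Icc (a k) (b k)), z ≠ w := by
      intro z hz he
      apply hxk
      rw [Set.mem_preimage, he, hw] at hz
      exact ((Set.mem_prod.mp hz).1 : x₀ ∈ ({x k} : Set ℝ)).symm
    have hcontOn : ContinuousOn ψ (γ ⁻¹' ({x k} ×ˢ Set.Icc (a k) (b k))) :=
      fun z hz => (sphApp_continuousAt (hwne z hz)).continuousWithinAt
    have hOrd : (ψ '' (γ ⁻¹' ({x k} ×ˢ Set.Icc (a k) (b k)))).OrdConnected :=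
      (hApre.image ψ hcontOn).ordConnected
    have hs₁mem : s₁ k ∈ γ ⁻¹' ({x k} ×ˢ Set.Icc (a k) (b k)) := by
      rw [Set.mem_preimage, hs₁def]
      rw [hγs q₁ k ha1.le hb1.le]
      exact Set.mk_mem_prod (Set.mem_singleton _) ⟨ha1.le, hb1.le⟩
    have hs₂mem : s₂ k ∈ γ ⁻¹' ({x k} ×ˢ Set.Icc (a k) (b k)) := by
      rw [Set.mem_preimage, hs₂def]
      rw [hγs q₂ k ha2.le hb2.le]
      exact Set.mk_mem_prod (Set.mem_singleton _) ⟨ha2.le, hb2.le⟩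
    obtain ⟨hmin, hmax⟩ := straddle_aux hp1 hp2
    rcases le_total (ψ (s₁ k)) (ψ (s₂ k)) with h | h
    · exact hOrd.out (Set.mem_image_of_mem ψ hs₁mem) (Set.mem_image_of_mem ψ hs₂mem)
        ⟨by rwa [min_eq_left h] at hmin, by rwa [max_eq_right h] at hmax⟩
    · exact hOrd.out (Set.mem_image_of_mem ψ hs₂mem) (Set.mem_image_of_mem ψ hs₁mem)
        ⟨by rwa [min_eq_right h] at hmin, by rwa [max_eq_left h] at hmax⟩
  obtain ⟨za, hza, hzaψ⟩ := key n hn hxn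
  obtain ⟨zb, hzb, hzbψ⟩ := key m hm hxm
  have hzab : za = zb := sphApp_injective w (hzaψ.trans hzbψ.symm)
  rw [Set.mem_preimage] at hza hzb
  rw [← hzab] at hzb
  exact Set.disjoint_left.mp (hdisj hnm) hza hzb
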